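/- Let p be an odd prime dividing the odd squarefree integer S, and α ∈ ℤ_p^×. Then the form α·x² + 2Sα·y² + 2S·z² is equivalent over ℤ_p to α·x² + αp·y² + p·z². Moreover, the square class of α in ℤ_p^×/(ℤ_p^×)² is uniquely determined by the ℤ_p-equivalence class: if α·x² + αp·y² + p·z² is ℤ_p-equivalent to α'·x² + α'p·y² + p·z² with α' ∈ ℤ_p^×, then α/α' is a square in ℤ_p^×. -/

import Mathlib

open PadicInt Polynomial

section aux

variable {p : ℕ} [Fact p.Prime]

private lemma aux_norm_nat_eq_one (hnd : ¬ p ∣ n) : ‖(n : ℤ_[p])‖ = 1 := by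
  refine le_antisymm (PadicInt.norm_le_one _) (not_lt.mp ?_)
  intro h
  have : ‖((n : ℤ) : ℤ_[p])‖ < 1 := by push_cast; exact_mod_cast h
  rw [PadicInt.norm_int_lt_one_iff_dvd] at this
  exact hnd (by exact_mod_cast this)

private lemma aux_two_norm (hp : p ≠ 2) : ‖(2 : ℤ_[p])‖ = 1 := by
  have : ¬ p ∣ 2 := fun h => hp ((Nat.prime_dvd_prime_iff_eq (Fact.out) Nat.prime_two).mp h)
  simpa using aux_norm_nat_eq_one (p := p) (n := 2) this

/-- Hensel lifting of squares. -/
private lemma aux_sq_lift (hp : p ≠ 2) (t b : ℤ_[p]) (ht : ‖t‖ = 1)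
    (hb : ‖b - t ^ 2‖ < 1) : ∃ s : ℤ_[p], s ^ 2 = b := by
  set F : Polynomial ℤ_[p] := X ^ 2 - C b with hF
  have hder : F.derivative = C 2 * X := by
    simp [hF]
    rw [one_add_one_eq_two]; rfl
  have hkey : ‖F.eval t‖ < ‖F.derivative.eval t‖ ^ 2 := by
    rw [hder]
    have h1 : ‖F.eval t‖ = ‖b - t ^ 2‖ := by
      simp [hF]
      rw [show t ^ 2 - b = -(b - t ^ 2) by ring, norm_neg]
    have h2 : ‖(C 2 * X : Polynomial ℤ_[p]).eval t‖ = 1 := by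
      simp [norm_mul, aux_two_norm hp, ht]
    rw [h1, h2]
    simpa using hb
  obtain ⟨z, hz, -⟩ := hensels_lemma hkey
  refine ⟨z, ?_⟩
  have : z ^ 2 - b = 0 := by simpa [hF] using hz
  linear_combination this

private lemma aux_toZMod_eq_zero_iff (z : ℤ_[p]) : PadicInt.toZMod z = 0 ↔ ‖z‖ < 1 := by
  rw [← RingHom.mem_ker, PadicInt.ker_toZMod, PadicInt.maximalIdeal_eq_span_p,
    Ideal.mem_span_singleton, ← PadicInt.norm_lt_one_iff_dvd]

/-- every unit is represented by a*x^2 + y^2 for a unit a. -/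
private lemma aux_repr (hp : p ≠ 2) (a c : ℤ_[p]) (ha : ‖a‖ = 1) (hc : ‖c‖ = 1) :
    ∃ x y : ℤ_[p], a * x ^ 2 + y ^ 2 = c := by
  have hcard : Fintype.card (ZMod p) % 2 = 1 := by
    rw [ZMod.card]
    exact Nat.odd_iff.mp ((Fact.out : p.Prime).odd_of_ne_two hp)
  have ha0 : PadicInt.toZMod a ≠ 0 := by
    simp [Ne, aux_toZMod_eq_zero_iff, ha]
  have hc0 : PadicInt.toZMod c ≠ 0 := by
    simp [Ne, aux_toZMod_eq_zero_iff, hc]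
  have hdegf : (C (PadicInt.toZMod a) * X ^ 2 : (ZMod p)[X]).degree = 2 :=
    degree_C_mul_X_pow 2 ha0
  have hdegg : ((X : (ZMod p)[X]) ^ 2 - C (PadicInt.toZMod c)).degree = 2 :=
    degree_X_pow_sub_C (by norm_num) _
  obtain ⟨x₀, y₀, hxy₀⟩ := FiniteField.exists_root_sum_quadratic hdegf hdegg hcard
  simp only [eval_mul, eval_C, eval_pow, eval_X, eval_sub] at hxy₀
  set x : ℤ_[p] := (x₀.val : ℤ_[p]) with hx
  set y : ℤ_[p] := (y₀.val : ℤ_[p]) with hy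
  have htx : PadicInt.toZMod x = x₀ := by rw [hx, map_natCast, ZMod.natCast_zmod_val]
  have hty : PadicInt.toZMod y = y₀ := by rw [hy, map_natCast, ZMod.natCast_zmod_val]
  have hmod : ‖a * x ^ 2 + y ^ 2 - c‖ < 1 := by
    rw [← aux_toZMod_eq_zero_iff]
    simp only [map_add, map_sub, map_mul, map_pow, htx, hty]
    linear_combination hxy₀
  obtain ⟨ainv, hainv⟩ := isUnit_iff_exists_inv.mp (PadicInt.isUnit_iff.mpr ha)
  have hainvnorm : ‖ainv‖ = 1 := by
    have := congrArg (fun z : ℤ_[p] => ‖z‖) hainv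
    simp only [norm_mul, ha, one_mul, norm_one] at this
    exact this
  by_cases hy0 : y₀ = 0
  · -- use Hensel on x
    have hyz : y = 0 := by rw [hy, hy0]; simp
    have hx0 : x₀ ≠ 0 := by
      intro h0
      rw [hy0, h0] at hxy₀
      simp at hxy₀
      exact hc0 hxy₀
    have hxnorm : ‖x‖ = 1 := by
      refine le_antisymm (PadicInt.norm_le_one _) (not_lt.mp ?_)
      rw [← aux_toZMod_eq_zero_iff, htx]
      exact hx0
    have hbt : ‖ainv * c - x ^ 2‖ < 1 := by
      have heq : ainv * c - x ^ 2 = ainv * (-(a * x ^ 2 + y ^ 2 - c)) := by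
        rw [hyz]
        linear_combination x ^ 2 * hainv
      rw [heq, norm_mul, hainvnorm, one_mul, norm_neg]
      exact hmod
    obtain ⟨s, hs⟩ := aux_sq_lift hp x (ainv * c) hxnorm hbt
    refine ⟨s, 0, ?_⟩
    rw [hs]
    linear_combination c * hainv
  · have hynorm : ‖y‖ = 1 := by
      refine le_antisymm (PadicInt.norm_le_one _) (not_lt.mp ?_)
      rw [← aux_toZMod_eq_zero_iff, hty]
      exact hy0
    have hbt : ‖(c - a * x ^ 2) - y ^ 2‖ < 1 := by
      rw [show (c - a * x ^ 2) - y ^ 2 = -(a * x ^ 2 + y ^ 2 - c) by ring, norm_neg]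
      exact hmod
    obtain ⟨s, hs⟩ := aux_sq_lift hp y (c - a * x ^ 2) hynorm hbt
    refine ⟨x, s, ?_⟩
    rw [hs]
    ring

end aux

theorem stmt_10 (p : ℕ) [Fact p.Prime] (hp : p ≠ 2) (S : ℕ) (hS : Odd S)
    (hsf : Squarefree S) (hpS : p ∣ S) (α : ℤ_[p]) (hα : IsUnit α) :
    (∃ M : Matrix (Fin 3) (Fin 3) ℤ_[p], IsUnit M.det ∧
      ∀ v : Fin 3 → ℤ_[p],
        α * (v 0) ^ 2 + 2 * (S : ℤ_[p]) * α * (v 1) ^ 2 + 2 * (S : ℤ_[p]) * (v 2) ^ 2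
          = α * (M.mulVec v 0) ^ 2 + α * (p : ℤ_[p]) * (M.mulVec v 1) ^ 2
            + (p : ℤ_[p]) * (M.mulVec v 2) ^ 2) ∧
    (∀ α' : ℤ_[p], IsUnit α' →
      (∃ M : Matrix (Fin 3) (Fin 3) ℤ_[p], IsUnit M.det ∧
        ∀ v : Fin 3 → ℤ_[p],
          α * (v 0) ^ 2 + α * (p : ℤ_[p]) * (v 1) ^ 2 + (p : ℤ_[p]) * (v 2) ^ 2
            = α' * (M.mulVec v 0) ^ 2 + α' * (p : ℤ_[p]) * (M.mulVec v 1) ^ 2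
              + (p : ℤ_[p]) * (M.mulVec v 2) ^ 2) →
      ∃ β : ℤ_[p], IsUnit β ∧ α = α' * β ^ 2) := by
  have hprime : p.Prime := Fact.out
  have hαnorm : ‖α‖ = 1 := PadicInt.isUnit_iff.mp hα
  obtain ⟨ainv, hainv⟩ := isUnit_iff_exists_inv.mp hα
  have hainvnorm : ‖ainv‖ = 1 := by
    have := congrArg (fun z : ℤ_[p] => ‖z‖) hainv
    simp only [norm_mul, hαnorm, one_mul, norm_one] at this
    exact this
  constructor
  · -- existence of the equivalence
    obtain ⟨T, hT⟩ := hpS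
    have hpT : ¬ p ∣ T := by
      rintro ⟨T', hT'⟩
      have : IsUnit p := hsf p ⟨T', by rw [hT, hT']; ring⟩
      exact hprime.ne_one (Nat.isUnit_iff.mp this)
    have hTnorm : ‖((T : ℕ) : ℤ_[p])‖ = 1 := aux_norm_nat_eq_one hpT
    set u : ℤ_[p] := 2 * (T : ℤ_[p]) with hu
    have hunorm : ‖u‖ = 1 := by
      rw [hu, norm_mul, aux_two_norm hp, hTnorm, one_mul]
    obtain ⟨uinv, huinv⟩ := isUnit_iff_exists_inv.mp (PadicInt.isUnit_iff.mpr hunorm)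
    have huinvnorm : ‖uinv‖ = 1 := by
      have := congrArg (fun z : ℤ_[p] => ‖z‖) huinv
      simp only [norm_mul, hunorm, one_mul, norm_one] at this
      exact this
    have hcnorm : ‖α * uinv‖ = 1 := by
      rw [norm_mul, hαnorm, huinvnorm, one_mul]
    obtain ⟨x, y, hxy⟩ := aux_repr hp α (α * uinv) hαnorm hcnorm
    have h2S : (2 : ℤ_[p]) * (S : ℤ_[p]) = (p : ℤ_[p]) * u := by
      rw [hu, hT]
      push_cast
      ring
    refine ⟨!![1, 0, 0; 0, u * x, u * ainv * y; 0, u * y, -(u * x)], ?_, ?_⟩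
    · have hdet : (!![1, 0, 0; 0, u * x, u * ainv * y;
          0, u * y, -(u * x)] : Matrix (Fin 3) (Fin 3) ℤ_[p]).det = -u := by
        simp [Matrix.det_fin_three]
        linear_combination (-(u ^ 2 * ainv)) * hxy + (u ^ 2 * (x ^ 2 - uinv)) * hainv
          + (-u) * huinv
      rw [hdet]
      exact (PadicInt.isUnit_iff.mpr hunorm).neg
    · intro v
      simp only [Matrix.mulVec, dotProduct, Fin.sum_univ_three, Matrix.cons_val',
        Matrix.cons_val_zero, Matrix.cons_val_one, Matrix.head_cons, Matrix.empty_val',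
        Matrix.cons_val_fin_one, Matrix.head_fin_const, Matrix.cons_val_two, Matrix.tail_cons,
        Matrix.of_apply]
      linear_combination (α * (v 1) ^ 2 + (v 2) ^ 2) * h2S
        + (-((p : ℤ_[p]) * u * α * (v 1) ^ 2) - (p : ℤ_[p]) * u * (v 2) ^ 2) * huinv
        + (-((p : ℤ_[p]) * u ^ 2 * (v 1) ^ 2) - (p : ℤ_[p]) * u ^ 2 * ainv * (v 2) ^ 2) * hxy
        + ((p : ℤ_[p]) * u ^ 2 * (x ^ 2 - uinv - ainv * y ^ 2) * (v 2) ^ 2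
            - 2 * (p : ℤ_[p]) * u ^ 2 * x * y * (v 1) * (v 2)) * hainv
  · -- uniqueness of the square class
    rintro α' hα' ⟨M, -, hMeq⟩
    have hα'norm : ‖α'‖ = 1 := PadicInt.isUnit_iff.mp hα'
    obtain ⟨binv, hbinv⟩ := isUnit_iff_exists_inv.mp hα'
    have hbinvnorm : ‖binv‖ = 1 := by
      have := congrArg (fun z : ℤ_[p] => ‖z‖) hbinv
      simp only [norm_mul, hα'norm, one_mul, norm_one] at this
      exact this
    have heq := hMeq ![1, 0, 0]
    simp only [Matrix.mulVec, dotProduct, Fin.sum_univ_three, Matrix.cons_val_zero,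
      Matrix.cons_val_one, Matrix.head_cons, Matrix.cons_val_two, Matrix.tail_cons,
      mul_one, mul_zero, add_zero, zero_pow, one_pow] at heq
    -- heq : α = α' * (M 0 0)^2 + α' * p * (M 1 0)^2 + p * (M 2 0)^2
    set t : ℤ_[p] := M 0 0 with ht
    have hw : α - α' * t ^ 2
        = (p : ℤ_[p]) * (α' * (M 1 0) ^ 2 + (M 2 0) ^ 2) := by
      linear_combination heq
    have hwnorm : ‖α - α' * t ^ 2‖ < 1 := by
      rw [hw, norm_mul, PadicInt.norm_p]
      have hp1 : (1 : ℝ) < p := by exact_mod_cast hprime.one_lt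
      have h1 : ((p : ℝ))⁻¹ < 1 := by
        rw [inv_lt_one_iff₀]
        right
        exact hp1
      calc ((p : ℝ))⁻¹ * ‖α' * (M 1 0) ^ 2 + (M 2 0) ^ 2‖
          ≤ ((p : ℝ))⁻¹ * 1 := by
            apply mul_le_mul_of_nonneg_left (PadicInt.norm_le_one _)
            positivity
        _ < 1 := by rwa [mul_one]
    have htnorm : ‖t‖ = 1 := by
      refine le_antisymm (PadicInt.norm_le_one _) (not_lt.mp ?_)
      intro hlt
      have h1 : ‖α' * t ^ 2‖ < 1 := by
        rw [norm_mul, hα'norm, one_mul, pow_two, norm_mul]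
        nlinarith [norm_nonneg t]
      have h2 := PadicInt.nonarchimedean (α - α' * t ^ 2) (α' * t ^ 2)
      have h3 : α - α' * t ^ 2 + α' * t ^ 2 = α := by ring
      rw [h3, hαnorm] at h2
      have := max_lt hwnorm h1
      linarith
    have hbt : ‖α * binv - t ^ 2‖ < 1 := by
      have heq2 : α * binv - t ^ 2 = binv * (α - α' * t ^ 2) := by
        linear_combination t ^ 2 * hbinv
      rw [heq2, norm_mul, hbinvnorm, one_mul]
      exact hwnorm
    obtain ⟨s, hs⟩ := aux_sq_lift hp t (α * binv) htnorm hbt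
    have hsnorm : ‖s‖ = 1 := by
      have h1 : ‖s‖ * ‖s‖ = 1 := by
        rw [← norm_mul, ← pow_two, hs, norm_mul, hαnorm, hbinvnorm, one_mul]
      nlinarith [norm_nonneg s, PadicInt.norm_le_one s]
    refine ⟨s, PadicInt.isUnit_iff.mpr hsnorm, ?_⟩
    rw [hs]
    linear_combination (-α) * hbinv
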